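/- Let G=(V,E) be a finite simple graph, S ⊆ V, uv ∈ E an edge, and r,s ∈ {0,1}. Then, up to a global phase in {+1,−1}, 2 · ⟨s^{(π/2)}|_u ⟨r^{(π/2)}|_v |G;S⟩ = |(G∧uv)∖u∖v; S'⟩, where S' = (S∖{u,v}) Δ (N(u)∩N(v)) Δ (N(u)∖{v})^{r⊕[v∈S]} Δ (N(v)∖{u})^{s⊕[u∈S]}, with A^ε denoting A if ε=1 and ∅ if ε=0, [w∈S] being 1 if w∈S and 0 otherwise, ⊕ addition mod 2, Δ symmetric difference, and N(w) the neighborhood of w in G. -/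

import Mathlib

/-- Local complementation `G*u`. -/
def localComp {V : Type*} (G : SimpleGraph V) (u : V) : SimpleGraph V where
  Adj x y := x ≠ y ∧ Xor' (G.Adj x y) (G.Adj u x ∧ G.Adj u y)
  symm := by
    constructor
    rintro x y ⟨hxy, h⟩
    refine ⟨hxy.symm, ?_⟩
    rw [G.adj_comm y x, and_comm]
    exact h
  loopless := by constructor; rintro x ⟨h, -⟩; exact h rfl

/-- Pivoting (edge local complementation): `G∧uv = G*u*v*u`. -/
def pivot {V : Type*} (G : SimpleGraph V) (u v : V) : SimpleGraph V :=
  localComp (localComp (localComp G u) v) u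

instance {V : Type*} [DecidableEq V] (G : SimpleGraph V) [DecidableRel G.Adj] (u : V) :
    DecidableRel (localComp G u).Adj :=
  fun x y => by unfold localComp Xor'; infer_instance

instance {V : Type*} [DecidableEq V] (G : SimpleGraph V) [DecidableRel G.Adj] (u v : V) :
    DecidableRel (pivot G u v).Adj := by unfold pivot; infer_instance

noncomputable section

/-- The state space of qubits indexed by `V`: ℂ^{2^|V|}, given by amplitudes on the
computational basis states `|x⟩`, `x : V → Bool`. -/
abbrev QState (V : Type*) := (V → Bool) → ℂ

variable {V : Type*} [Fintype V] [DecidableEq V]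

/-- The Pauli operator `Z_S = ∏_{u∈S} Z_u`: `Z_S |x⟩ = (-1)^{|S ∩ supp x|} |x⟩`. -/
def Zop (S : Finset V) (ψ : QState V) : QState V :=
  fun x => (-1 : ℂ) ^ (S.filter (fun u => x u = true)).card * ψ x

/-- The Pauli operator `X_u`: flips qubit `u`. -/
def Xop (u : V) (ψ : QState V) : QState V :=
  fun x => ψ (Function.update x u (!x u))

/-- `q(x)`: the number of edges of `G` with both endpoints in the support of `x`. -/
def qVal (G : SimpleGraph V) [DecidableRel G.Adj] (x : V → Bool) : ℕ :=
  (G.edgeFinset.filter (fun e => ∀ v ∈ e, x v = true)).card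

/-- The graph state `|G⟩ = 2^{-n/2} ∑_x (-1)^{q(x)} |x⟩`. -/
def graphState (G : SimpleGraph V) [DecidableRel G.Adj] : QState V :=
  fun x => (-1 : ℂ) ^ qVal G x / (Real.sqrt (2 ^ Fintype.card V) : ℂ)

/-- The signed graph state `|G;S⟩ = Z_S |G⟩`. -/
def sgState (G : SimpleGraph V) [DecidableRel G.Adj] (S : Finset V) : QState V :=
  Zop S (graphState G)

/-- Decidability of adjacency for graphs pulled back along a map (e.g. induced subgraphs
on a subtype, modelling vertex deletion). -/
instance {V W : Type*} (G : SimpleGraph V) [DecidableRel G.Adj] (f : W → V) :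
    DecidableRel ((G.comap f).Adj) :=
  fun a b => inferInstanceAs (Decidable (G.Adj (f a) (f b)))

/-- The X-measurement bra `⟨s^{(π/2)}|`: `|0^{(π/2)}⟩ = (|0⟩+|1⟩)/√2`,
`|1^{(π/2)}⟩ = (|0⟩−|1⟩)/√2`. -/
noncomputable def xVec (s : Bool) : Bool → ℂ :=
  fun b => if s && b then -(Real.sqrt 2 : ℂ)⁻¹ else (Real.sqrt 2 : ℂ)⁻¹

/-- Partial inner product `⟨β|_u ⟨γ|_v |ψ⟩` contracting qubits `u` and `v` with the
single-qubit bras `β` and `γ`, yielding an (unnormalized) state on `V∖{u,v}`. -/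
def contract2 {V : Type*} [DecidableEq V] (u v : V) (β γ : Bool → ℂ) (ψ : QState V) :
    QState {w : V // w ≠ u ∧ w ≠ v} :=
  fun x => ∑ a : Bool, ∑ b : Bool, starRingEnd ℂ (β a) * starRingEnd ℂ (γ b) *
    ψ (fun w => if h1 : w = u then a else if h2 : w = v then b else x ⟨w, h1, h2⟩)

end

section Aux

open Finset

/-- indicator into `ZMod 2` -/
def ind (P : Prop) [Decidable P] : ZMod 2 := if P then 1 else 0

/-- Bool indicator -/
def bi (b : Bool) : ZMod 2 := ind (b = true)

noncomputable def chi (t : ZMod 2) : ℂ := if t = 0 then 1 else -1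

lemma zmod2_cases : ∀ t : ZMod 2, t = 0 ∨ t = 1 := by decide

lemma chi_add (a b : ZMod 2) : chi (a + b) = chi a * chi b := by
  rcases zmod2_cases a with h | h <;> rcases zmod2_cases b with h' | h' <;>
    subst h <;> subst h' <;> simp [chi] <;> decide

@[simp] lemma chi_zero : chi 0 = 1 := by norm_num [chi]

@[simp] lemma chi_one : chi 1 = -1 := by norm_num [chi]

lemma chi_mem_pm (t : ZMod 2) : chi t ∈ ({1, -1} : Set ℂ) := by
  rcases zmod2_cases t with h | h <;> subst h <;> simp

lemma neg_one_pow_chi (n : ℕ) : ((-1 : ℂ)) ^ n = chi (n : ZMod 2) := by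
  induction n with
  | zero => simp [chi]
  | succ k ih =>
    rw [pow_succ, ih, Nat.cast_add, Nat.cast_one, chi_add]
    norm_num [chi]

lemma ind_and (P Q : Prop) [Decidable P] [Decidable Q] :
    ind (P ∧ Q) = ind P * ind Q := by
  by_cases hP : P <;> by_cases hQ : Q <;> simp [ind, hP, hQ]

instance instDecXor' (P Q : Prop) [Decidable P] [Decidable Q] : Decidable (Xor' P Q) := by
  unfold Xor'; infer_instance

lemma ind_xor (P Q : Prop) [Decidable P] [Decidable Q] :
    ind (Xor' P Q) = ind P + ind Q := by
  by_cases hP : P <;> by_cases hQ : Q <;> simp [ind, Xor', hP, hQ] <;> decide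

lemma ind_congr {P Q : Prop} [Decidable P] [Decidable Q] (h : P ↔ Q) : ind P = ind Q := by
  simp [ind, h]

lemma ind_mul_self (P : Prop) [Decidable P] : ind P * ind P = ind P := by
  by_cases hP : P <;> simp [ind, hP]

@[simp] lemma ind_true_prop {P : Prop} [Decidable P] (h : P) : ind P = 1 := by simp [ind, h]

@[simp] lemma bi_true : bi true = 1 := by simp [bi, ind]

@[simp] lemma bi_false : bi false = 0 := by simp [bi, ind]

lemma bi_xor (a b : Bool) : bi (xor a b) = bi a + bi b := by
  cases a <;> cases b <;> simp <;> decide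

lemma bi_decide (P : Prop) [Decidable P] : bi (decide P) = ind P := by
  by_cases h : P <;> simp [h, ind]

lemma ind_lt_add {W : Type*} [LinearOrder W] {i j : W} (h : i ≠ j) :
    ind (i < j) + ind (j < i) = 1 := by
  rcases lt_trichotomy i j with h' | h' | h'
  · simp [ind, h', not_lt_of_gt h']
  · exact absurd h' h
  · simp [ind, h', not_lt_of_gt h']

lemma ind_lt_add' {W : Type*} [LinearOrder W] (i j : W) :
    ind (i < j) + ind (j < i) = 1 + ind (i = j) := by
  by_cases h : i = j
  · subst h; simp [ind]; decide
  · rw [ind_lt_add h]; simp [ind, h]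

lemma ind_symmDiff {α : Type*} [DecidableEq α] (A B : Finset α) (w : α) :
    ind (w ∈ symmDiff A B) = ind (w ∈ A) + ind (w ∈ B) := by
  by_cases hA : w ∈ A <;> by_cases hB : w ∈ B <;>
    simp [Finset.mem_symmDiff, ind, hA, hB] <;> decide

lemma chi4 (a b : ZMod 2) : 1 + chi a + chi b - chi a * chi b = 2 * chi (a * b) := by
  rcases zmod2_cases a with h | h <;> rcases zmod2_cases b with h' | h' <;>
    subst h <;> subst h' <;> simp <;> norm_num

lemma qVal_eq_pairs {W : Type*} [Fintype W] [DecidableEq W] [LinearOrder W]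
    (H : SimpleGraph W) [DecidableRel H.Adj] (y : W → Bool) :
    qVal H y =
      ((univ : Finset (W × W)).filter
        (fun p => p.1 < p.2 ∧ H.Adj p.1 p.2 ∧ y p.1 = true ∧ y p.2 = true)).card := by
  rw [qVal]
  symm
  refine Finset.card_bij (fun (p : W × W) _ => s(p.1, p.2)) ?_ ?_ ?_
  · rintro ⟨i, j⟩ hp
    simp only [mem_filter, mem_univ, true_and] at hp
    simp only [mem_filter, SimpleGraph.mem_edgeFinset, SimpleGraph.mem_edgeSet]
    refine ⟨hp.2.1, ?_⟩
    intro w hw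
    rw [Sym2.mem_iff] at hw
    rcases hw with rfl | rfl
    · exact hp.2.2.1
    · exact hp.2.2.2
  · rintro ⟨i, j⟩ h1 ⟨i', j'⟩ h2 he
    simp only [mem_filter, mem_univ, true_and] at h1 h2
    rw [Sym2.eq_iff] at he
    rcases he with ⟨rfl, rfl⟩ | ⟨rfl, rfl⟩
    · rfl
    · exact absurd h2.1 (not_lt_of_gt h1.1)
  · intro e he
    simp only [mem_filter, SimpleGraph.mem_edgeFinset, SimpleGraph.mem_edgeSet] at he
    induction e with
    | _ a b =>
      have hadj : H.Adj a b := he.1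
      have hab : a ≠ b := hadj.ne
      have hya : y a = true := he.2 a (Sym2.mem_mk_left a b)
      have hyb : y b = true := he.2 b (Sym2.mem_mk_right a b)
      rcases lt_or_gt_of_ne hab with h | h
      · exact ⟨(a, b), by simp [h, hadj, hya, hyb], rfl⟩
      · exact ⟨(b, a), by simp [h, hadj.symm, hya, hyb], Sym2.eq_swap⟩

lemma qVal_zmod {W : Type*} [Fintype W] [DecidableEq W] [LinearOrder W]
    (H : SimpleGraph W) [DecidableRel H.Adj] (y : W → Bool) :
    ((qVal H y : ℕ) : ZMod 2) =
      ∑ i : W, ∑ j : W, ind (i < j) * ind (H.Adj i j) * bi (y i) * bi (y j) := by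
  rw [qVal_eq_pairs, Finset.card_filter]
  push_cast
  rw [← Fintype.sum_prod_type']
  apply Finset.sum_congr rfl
  rintro ⟨i, j⟩ -
  rw [bi, bi, ← ind_and, ← ind_and, ← ind_and]
  simp only [ind]
  split_ifs <;> simp_all

lemma sum_split_uv {V : Type*} [Fintype V] [DecidableEq V] {u v : V} (huv : u ≠ v)
    {M : Type*} [AddCommMonoid M] (F : V → M) :
    ∑ i : V, F i = F u + F v + ∑ k : {w : V // w ≠ u ∧ w ≠ v}, F k.1 := by
  have h1 : ∑ k : {w : V // w ≠ u ∧ w ≠ v}, F k.1 =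
      ∑ w ∈ univ.filter (fun w : V => w ≠ u ∧ w ≠ v), F w :=
    (Finset.sum_subtype _ (fun w => by simp) F).symm
  rw [h1, ← Finset.sum_filter_add_sum_filter_not univ (fun w : V => w ≠ u ∧ w ≠ v) F]
  have h2 : univ.filter (fun w : V => ¬(w ≠ u ∧ w ≠ v)) = {u, v} := by
    ext w; simp only [mem_filter, mem_univ, true_and, mem_insert, mem_singleton]
    tauto
  rw [h2, Finset.sum_pair huv]
  exact add_comm _ _

lemma pivot_adj_iff {V : Type*} (G : SimpleGraph V) {u v i j : V} (huv : G.Adj u v)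
    (hij : i ≠ j) (hiu : i ≠ u) (hiv : i ≠ v) (hju : j ≠ u) (hjv : j ≠ v) :
    ((pivot G u v).Adj i j ↔
      Xor' (G.Adj i j) (Xor' (G.Adj u i ∧ G.Adj v j) (G.Adj v i ∧ G.Adj u j))) := by
  have huv' : u ≠ v := huv.ne
  have hvu : G.Adj v u := huv.symm
  simp only [pivot, localComp, Xor']
  by_cases h1 : G.Adj u i <;> by_cases h2 : G.Adj u j <;>
    by_cases h3 : G.Adj v i <;> by_cases h4 : G.Adj v j <;>
    by_cases h5 : G.Adj i j <;>
    simp_all [hij, hiu, hiv, hju, hjv, huv, hvu, huv', huv'.symm, hiu.symm, hiv.symm,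
      hju.symm, hjv.symm, hij.symm]

end Aux


section Aux2

open Finset

lemma chi_sq (t : ZMod 2) : chi t * chi t = 1 := by
  rcases zmod2_cases t with h | h <;> subst h <;> simp

lemma endgame (K2 a b p q : ZMod 2) (i2 CW : ℂ) (h2 : i2 * i2 = 2⁻¹) :
    2 * (chi (K2 + a + b + 1) * (i2 * (i2 * (2 * CW)⁻¹))
        + chi (K2 + a) * (i2 * (i2 * (2 * CW)⁻¹))
      + (chi (K2 + b) * (i2 * (i2 * (2 * CW)⁻¹))
        + chi K2 * (i2 * (i2 * (2 * CW)⁻¹))))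
      = chi (p * q) * (chi (K2 + a * b + p * q) * CW⁻¹) := by
  have e1 : chi (K2 + a + b + 1) = chi K2 * chi a * chi b * chi 1 := by
    rw [show K2 + a + b + 1 = K2 + (a + (b + 1)) by ring, chi_add, chi_add, chi_add]; ring
  have e2 : chi (K2 + a) = chi K2 * chi a := chi_add _ _
  have e3 : chi (K2 + b) = chi K2 * chi b := chi_add _ _
  have e4 : chi (K2 + a * b + p * q) = chi K2 * chi (a * b) * chi (p * q) := by
    rw [show K2 + a * b + p * q = K2 + (a * b + p * q) by ring, chi_add, chi_add]; ring
  have hz : i2 * (i2 * (2 * CW)⁻¹) = 2⁻¹ * (2 * CW)⁻¹ := by rw [← mul_assoc, h2]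
  rw [e1, e2, e3, e4, chi_one, hz, mul_inv]
  linear_combination (2⁻¹ * CW⁻¹ * chi K2) * chi4 a b
    - (chi K2 * chi (a * b) * CW⁻¹) * chi_sq (p * q)

lemma card_filter_zmod {α : Type*} [Fintype α] [DecidableEq α] (S : Finset α)
    (p : α → Prop) [DecidablePred p] :
    (((S.filter p).card : ℕ) : ZMod 2) = ∑ w : α, ind (w ∈ S) * ind (p w) := by
  rw [show S.filter p = univ.filter (fun w => w ∈ S ∧ p w) from by ext w; simp,
    Finset.card_filter]
  push_cast
  refine Finset.sum_congr rfl fun w _ => ?_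
  rw [← ind_and]
  by_cases h : w ∈ S ∧ p w <;> simp [ind, h]

lemma conj_xVec (t a : Bool) :
    (starRingEnd ℂ) (xVec t a) = chi (bi t * bi a) * ((Real.sqrt 2 : ℝ) : ℂ)⁻¹ := by
  cases t <;> cases a <;>
    simp [xVec, chi, bi, ind, map_inv₀, Complex.conj_ofReal] <;> decide

end Aux2


section Parity

open Finset

variable {V : Type} [Fintype V] [DecidableEq V] [LinearOrder V]
  (G : SimpleGraph V) [DecidableRel G.Adj] {u v : V}

lemma qVal_extend_parity (huv : G.Adj u v)
    (x : {w : V // w ≠ u ∧ w ≠ v} → Bool) (a b : Bool) :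
    ((qVal G (fun w => if h1 : w = u then a else if h2 : w = v then b
        else x ⟨w, h1, h2⟩) : ℕ) : ZMod 2)
      = (∑ k : {w : V // w ≠ u ∧ w ≠ v}, ∑ l : {w : V // w ≠ u ∧ w ≠ v},
            ind (k.1 < l.1) * ind (G.Adj k.1 l.1) * bi (x k) * bi (x l))
        + bi a * (∑ k : {w : V // w ≠ u ∧ w ≠ v}, ind (G.Adj u k.1) * bi (x k))
        + bi b * (∑ k : {w : V // w ≠ u ∧ w ≠ v}, ind (G.Adj v k.1) * bi (x k))
        + bi a * bi b := by
  have huvne : u ≠ v := huv.ne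
  set g : V → Bool := fun w => if h1 : w = u then a else if h2 : w = v then b
      else x ⟨w, h1, h2⟩ with hgdef
  have hgu : g u = a := by simp [hgdef]
  have hgv : g v = b := by simp [hgdef, huvne.symm]
  have hgk : ∀ k : {w : V // w ≠ u ∧ w ≠ v}, g k.1 = x k := by
    rintro ⟨k, hk1, hk2⟩; simp [hgdef, hk1, hk2]
  set T : V → V → ZMod 2 :=
    fun i j => ind (i < j) * ind (G.Adj i j) * bi (g i) * bi (g j) with hTdef
  have key : ((qVal G g : ℕ) : ZMod 2) = ∑ i : V, ∑ j : V, T i j := qVal_zmod G g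
  rw [key, sum_split_uv huvne (fun i => ∑ j : V, T i j)]
  rw [sum_split_uv huvne (fun j => T u j), sum_split_uv huvne (fun j => T v j)]
  have hsplit : ∀ k : {w : V // w ≠ u ∧ w ≠ v},
      ∑ j : V, T k.1 j = T k.1 u + T k.1 v + ∑ l : {w : V // w ≠ u ∧ w ≠ v}, T k.1 l.1 :=
    fun k => sum_split_uv huvne _
  simp only [hsplit, Finset.sum_add_distrib]
  have h1 : T u u = 0 := by simp [hTdef, ind, lt_irrefl]
  have h2 : T v v = 0 := by simp [hTdef, ind, lt_irrefl]
  have h3 : T u v + T v u = bi a * bi b := by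
    simp only [hTdef, hgu, hgv, ind_true_prop huv, ind_true_prop huv.symm]
    linear_combination (ind_lt_add huvne) * (bi a * bi b)
  have h4 : (∑ l : {w : V // w ≠ u ∧ w ≠ v}, T u l.1)
      + (∑ k : {w : V // w ≠ u ∧ w ≠ v}, T k.1 u)
      = bi a * (∑ k : {w : V // w ≠ u ∧ w ≠ v}, ind (G.Adj u k.1) * bi (x k)) := by
    rw [← Finset.sum_add_distrib, Finset.mul_sum]
    refine Finset.sum_congr rfl fun k _ => ?_
    simp only [hTdef, hgu, hgk, ind_congr (G.adj_comm k.1 u)]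
    linear_combination (ind_lt_add (Ne.symm k.2.1)) * (ind (G.Adj u k.1) * bi a * bi (x k))
  have h5 : (∑ l : {w : V // w ≠ u ∧ w ≠ v}, T v l.1)
      + (∑ k : {w : V // w ≠ u ∧ w ≠ v}, T k.1 v)
      = bi b * (∑ k : {w : V // w ≠ u ∧ w ≠ v}, ind (G.Adj v k.1) * bi (x k)) := by
    rw [← Finset.sum_add_distrib, Finset.mul_sum]
    refine Finset.sum_congr rfl fun k _ => ?_
    simp only [hTdef, hgv, hgk, ind_congr (G.adj_comm k.1 v)]
    linear_combination (ind_lt_add (Ne.symm k.2.2)) * (ind (G.Adj v k.1) * bi b * bi (x k))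
  have h6 : (∑ k : {w : V // w ≠ u ∧ w ≠ v}, ∑ l : {w : V // w ≠ u ∧ w ≠ v}, T k.1 l.1)
      = ∑ k : {w : V // w ≠ u ∧ w ≠ v}, ∑ l : {w : V // w ≠ u ∧ w ≠ v},
          ind (k.1 < l.1) * ind (G.Adj k.1 l.1) * bi (x k) * bi (x l) := by
    refine Finset.sum_congr rfl fun k _ => Finset.sum_congr rfl fun l _ => ?_
    simp only [hTdef, hgk]
  rw [h6] at *
  linear_combination h1 + h2 + h3 + h4 + h5

end Parity


section Parity2

open Finset

variable {V : Type} [Fintype V] [DecidableEq V] [LinearOrder V]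
  (G : SimpleGraph V) [DecidableRel G.Adj] {u v : V}

lemma qVal_pivot_parity (huv : G.Adj u v)
    (x : {w : V // w ≠ u ∧ w ≠ v} → Bool) :
    ((qVal ((pivot G u v).comap
        (Subtype.val : {w : V // w ≠ u ∧ w ≠ v} → V)) x : ℕ) : ZMod 2)
      = (∑ k : {w : V // w ≠ u ∧ w ≠ v}, ∑ l : {w : V // w ≠ u ∧ w ≠ v},
            ind (k.1 < l.1) * ind (G.Adj k.1 l.1) * bi (x k) * bi (x l))
        + (∑ k : {w : V // w ≠ u ∧ w ≠ v}, ind (G.Adj u k.1) * bi (x k))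
          * (∑ k : {w : V // w ≠ u ∧ w ≠ v}, ind (G.Adj v k.1) * bi (x k))
        + (∑ k : {w : V // w ≠ u ∧ w ≠ v},
            ind (G.Adj u k.1) * ind (G.Adj v k.1) * bi (x k)) := by
  rw [qVal_zmod]
  have hterm : ∀ k l : {w : V // w ≠ u ∧ w ≠ v},
      ind (k < l) * ind (((pivot G u v).comap
          (Subtype.val : {w : V // w ≠ u ∧ w ≠ v} → V)).Adj k l) * bi (x k) * bi (x l)
        = ind (k.1 < l.1) * ind (G.Adj k.1 l.1) * bi (x k) * bi (x l)
          + ind (k.1 < l.1) * (ind (G.Adj u k.1) * ind (G.Adj v l.1)) * bi (x k) * bi (x l)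
          + ind (k.1 < l.1) * (ind (G.Adj v k.1) * ind (G.Adj u l.1)) * bi (x k) * bi (x l) := by
    intro k l
    have hco : ind (k < l) = ind (k.1 < l.1) := ind_congr Subtype.coe_lt_coe.symm
    rw [hco]
    by_cases hkl : k.1 < l.1
    · have hne : k.1 ≠ l.1 := ne_of_lt hkl
      have hiff := pivot_adj_iff G huv hne k.2.1 k.2.2 l.2.1 l.2.2
      rw [show ind (((pivot G u v).comap
            (Subtype.val : {w : V // w ≠ u ∧ w ≠ v} → V)).Adj k l)
          = ind (G.Adj k.1 l.1) + ind (G.Adj u k.1) * ind (G.Adj v l.1)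
            + ind (G.Adj v k.1) * ind (G.Adj u l.1) from ?_]
      · ring
      · rw [ind_congr (by simpa [SimpleGraph.comap_adj] using hiff), ind_xor, ind_xor,
          ind_and, ind_and]
        ring
    · simp [ind, hkl]
  simp only [hterm, Finset.sum_add_distrib]
  set f : {w : V // w ≠ u ∧ w ≠ v} → {w : V // w ≠ u ∧ w ≠ v} → ZMod 2 :=
    fun k l => (ind (G.Adj u k.1) * bi (x k)) * (ind (G.Adj v l.1) * bi (x l)) with hf
  have hP : (∑ k : {w : V // w ≠ u ∧ w ≠ v}, ∑ l : {w : V // w ≠ u ∧ w ≠ v},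
      ind (k.1 < l.1) * (ind (G.Adj u k.1) * ind (G.Adj v l.1)) * bi (x k) * bi (x l))
      = ∑ k : {w : V // w ≠ u ∧ w ≠ v}, ∑ l : {w : V // w ≠ u ∧ w ≠ v},
          ind (k.1 < l.1) * f k l := by
    refine Finset.sum_congr rfl fun k _ => Finset.sum_congr rfl fun l _ => ?_
    rw [hf]; ring
  have hQ : (∑ k : {w : V // w ≠ u ∧ w ≠ v}, ∑ l : {w : V // w ≠ u ∧ w ≠ v},
      ind (k.1 < l.1) * (ind (G.Adj v k.1) * ind (G.Adj u l.1)) * bi (x k) * bi (x l))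
      = ∑ k : {w : V // w ≠ u ∧ w ≠ v}, ∑ l : {w : V // w ≠ u ∧ w ≠ v},
          ind (l.1 < k.1) * f k l := by
    rw [Finset.sum_comm]
    refine Finset.sum_congr rfl fun k _ => Finset.sum_congr rfl fun l _ => ?_
    rw [hf]; ring
  rw [hP, hQ]
  have hmerge : (∑ k : {w : V // w ≠ u ∧ w ≠ v}, ∑ l : {w : V // w ≠ u ∧ w ≠ v},
        ind (k.1 < l.1) * f k l)
      + (∑ k : {w : V // w ≠ u ∧ w ≠ v}, ∑ l : {w : V // w ≠ u ∧ w ≠ v},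
        ind (l.1 < k.1) * f k l)
      = (∑ k : {w : V // w ≠ u ∧ w ≠ v}, ∑ l : {w : V // w ≠ u ∧ w ≠ v}, f k l)
        + (∑ k : {w : V // w ≠ u ∧ w ≠ v}, ∑ l : {w : V // w ≠ u ∧ w ≠ v},
            ind (k.1 = l.1) * f k l) := by
    rw [← Finset.sum_add_distrib, ← Finset.sum_add_distrib]
    refine Finset.sum_congr rfl fun k _ => ?_
    rw [← Finset.sum_add_distrib, ← Finset.sum_add_distrib]
    refine Finset.sum_congr rfl fun l _ => ?_
    by_cases h : (k : V) = l.1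
    · simp only [ind, h, lt_irrefl, if_false, if_pos rfl, if_true, zero_mul, one_mul,
        zero_add]
      exact (CharTwo.add_self_eq_zero (f k l)).symm
    · have h0 : ind ((k : V) = l.1) = 0 := by simp [ind, h]
      rcases lt_or_gt_of_ne h with hlt | hlt
      · simp only [ind, hlt, not_lt_of_gt hlt, if_true, if_false, if_neg h]
        ring
      · simp only [ind, hlt, not_lt_of_gt hlt, if_true, if_false, if_neg h]
        ring
  have hdiag : (∑ k : {w : V // w ≠ u ∧ w ≠ v}, ∑ l : {w : V // w ≠ u ∧ w ≠ v},
      ind (k.1 = l.1) * f k l)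
      = ∑ k : {w : V // w ≠ u ∧ w ≠ v},
          ind (G.Adj u k.1) * ind (G.Adj v k.1) * bi (x k) := by
    refine Finset.sum_congr rfl fun k _ => ?_
    rw [Finset.sum_eq_single k]
    · rw [hf]
      have : ind ((k : V) = k.1) = 1 := ind_true_prop rfl
      rw [this]
      have hb : bi (x k) * bi (x k) = bi (x k) := ind_mul_self _
      linear_combination (ind (G.Adj u k.1) * ind (G.Adj v k.1)) * hb
    · intro l _ hlk
      have : ¬ ((k : V) = l.1) := fun h => hlk.symm (Subtype.ext h)
      simp [ind, this]
    · intro h; exact absurd (Finset.mem_univ k) h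
  have hprod : (∑ k : {w : V // w ≠ u ∧ w ≠ v}, ∑ l : {w : V // w ≠ u ∧ w ≠ v}, f k l)
      = (∑ k : {w : V // w ≠ u ∧ w ≠ v}, ind (G.Adj u k.1) * bi (x k))
        * (∑ k : {w : V // w ≠ u ∧ w ≠ v}, ind (G.Adj v k.1) * bi (x k)) := by
    rw [Finset.sum_mul_sum]
  linear_combination hmerge + hdiag + hprod
end Parity2

/-- X-measurement of two adjacent qubits `u`, `v` of a signed graph state: up to a global
phase `ε ∈ {+1,−1}`, `2·⟨s^{(π/2)}|_u ⟨r^{(π/2)}|_v |G;S⟩ = |(G∧uv)∖u∖v; S'⟩` where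
`S' = (S∖{u,v}) Δ (N(u)∩N(v)) Δ (N(u)∖{v})^{r⊕[v∈S]} Δ (N(v)∖{u})^{s⊕[u∈S]}`. -/
theorem xMeasure_pair_sgState {V : Type} [Fintype V] [DecidableEq V]
    (G : SimpleGraph V) [DecidableRel G.Adj] (S : Finset V)
    (u v : V) (huv : G.Adj u v) (r s : Bool) :
    ∃ ε : ℂ, ε ∈ ({1, -1} : Set ℂ) ∧
      (2 : ℂ) • contract2 u v (xVec s) (xVec r) (sgState G S) =
        ε • sgState ((pivot G u v).comap (Subtype.val : {w : V // w ≠ u ∧ w ≠ v} → V))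
          (Finset.univ.filter (fun w : {w : V // w ≠ u ∧ w ≠ v} =>
            w.1 ∈ symmDiff (symmDiff (symmDiff ((S.erase u).erase v)
              (G.neighborFinset u ∩ G.neighborFinset v))
              (if xor r (decide (v ∈ S)) then (G.neighborFinset u).erase v else ∅))
              (if xor s (decide (u ∈ S)) then (G.neighborFinset v).erase u else ∅))) := by
    classical
  letI : LinearOrder V := LinearOrder.lift' (Fintype.equivFin V) (Fintype.equivFin V).injective
  have huvne : u ≠ v := huv.ne
  refine ⟨chi ((bi s + ind (u ∈ S)) * (bi r + ind (v ∈ S))), chi_mem_pm _, ?_⟩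
  funext x
  simp only [Pi.smul_apply, smul_eq_mul]
  -- cardinality relation
  have hcard : Fintype.card V = Fintype.card {w : V // w ≠ u ∧ w ≠ v} + 2 := by
    have h0 := Finset.card_filter_add_card_filter_not
      (s := (Finset.univ : Finset V)) (p := fun w : V => w ≠ u ∧ w ≠ v)
    have h1 : (Finset.univ.filter (fun w : V => ¬(w ≠ u ∧ w ≠ v))) = {u, v} := by
      ext w
      simp only [Finset.mem_filter, Finset.mem_univ, true_and, Finset.mem_insert,
        Finset.mem_singleton]
      tauto
    rw [h1, Finset.card_pair huvne, Finset.card_univ] at h0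
    rw [Fintype.card_subtype]
    omega
  have hsqrtC : ((Real.sqrt (2 ^ Fintype.card V) : ℝ) : ℂ)
      = 2 * ((Real.sqrt (2 ^ Fintype.card {w : V // w ≠ u ∧ w ≠ v}) : ℝ) : ℂ) := by
    rw [hcard]
    have : Real.sqrt (2 ^ (Fintype.card {w : V // w ≠ u ∧ w ≠ v} + 2)) = 2 * Real.sqrt (2 ^ Fintype.card {w : V // w ≠ u ∧ w ≠ v}) := by
      rw [pow_succ, pow_succ, mul_assoc, Real.sqrt_mul (by positivity)]
      rw [show (2 : ℝ) * 2 = 4 by norm_num, show (4 : ℝ) = 2 ^ 2 by norm_num,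
        Real.sqrt_sq (by norm_num)]
      ring
    rw [this]
    push_cast
    ring
  have hi2 : ((Real.sqrt 2 : ℝ) : ℂ)⁻¹ * ((Real.sqrt 2 : ℝ) : ℂ)⁻¹ = 2⁻¹ := by
    rw [← mul_inv,
      show ((Real.sqrt 2 : ℝ) : ℂ) * ((Real.sqrt 2 : ℝ) : ℂ)
        = ((Real.sqrt 2 * Real.sqrt 2 : ℝ) : ℂ) from by push_cast; ring,
      Real.mul_self_sqrt (by norm_num)]
    norm_num
  -- signed graph state amplitudes, as chi of parities
  have hsgG : ∀ y : V → Bool, sgState G S y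
      = chi ((((S.filter (fun w => y w = true)).card : ℕ) : ZMod 2)
          + ((qVal G y : ℕ) : ZMod 2))
        * ((Real.sqrt (2 ^ Fintype.card V) : ℝ) : ℂ)⁻¹ := by
    intro y
    simp only [sgState, Zop, graphState, neg_one_pow_chi, chi_add, div_eq_mul_inv]
    ring
  -- parity of the S-count of the extensions
  have hM : ∀ a b : Bool,
      (((S.filter (fun w => (if h1 : w = u then a else if h2 : w = v then b
          else x ⟨w, h1, h2⟩) = true)).card : ℕ) : ZMod 2)
        = (∑ k : {w : V // w ≠ u ∧ w ≠ v}, ind (k.1 ∈ S) * bi (x k)) + bi a * ind (u ∈ S) + bi b * ind (v ∈ S) := by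
    intro a b
    rw [card_filter_zmod]
    rw [sum_split_uv huvne (fun w => ind (w ∈ S) * ind ((if h1 : w = u then a
        else if h2 : w = v then b else x ⟨w, h1, h2⟩) = true))]
    have e1 : ind ((if h1 : u = u then a else if h2 : u = v then b
        else x ⟨u, h1, h2⟩) = true) = bi a := by simp [bi, ind]
    have e2 : ind ((if h1 : v = u then a else if h2 : v = v then b
        else x ⟨v, h1, h2⟩) = true) = bi b := by simp [bi, ind, huvne.symm]
    have e3 : ∀ k : {w : V // w ≠ u ∧ w ≠ v}, ind ((if h1 : (k : V) = u then a else if h2 : (k : V) = v then b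
        else x ⟨(k : V), h1, h2⟩) = true) = bi (x k) := by
      rintro ⟨k, hk1, hk2⟩
      simp [bi, ind, hk1, hk2]
    rw [e1, e2, Finset.sum_congr rfl (fun k _ => by rw [e3 k])]
    ring
  have hQ : ∀ a b : Bool,
      ((qVal G (fun w => if h1 : w = u then a else if h2 : w = v then b
          else x ⟨w, h1, h2⟩) : ℕ) : ZMod 2)
        = (∑ k : {w : V // w ≠ u ∧ w ≠ v}, ∑ l : {w : V // w ≠ u ∧ w ≠ v}, ind (k.1 < l.1) * ind (G.Adj k.1 l.1) * bi (x k) * bi (x l)) + bi a * (∑ k : {w : V // w ≠ u ∧ w ≠ v}, ind (G.Adj u k.1) * bi (x k)) + bi b * (∑ k : {w : V // w ≠ u ∧ w ≠ v}, ind (G.Adj v k.1) * bi (x k)) + bi a * bi b :=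
    fun a b => qVal_extend_parity G huv x a b
  have hQ' := qVal_pivot_parity G huv x
  have hM' : ((((Finset.univ.filter (fun w : {w : V // w ≠ u ∧ w ≠ v} => w.1 ∈ symmDiff (symmDiff (symmDiff ((S.erase u).erase v) (G.neighborFinset u ∩ G.neighborFinset v)) (if xor r (decide (v ∈ S)) then (G.neighborFinset u).erase v else ∅)) (if xor s (decide (u ∈ S)) then (G.neighborFinset v).erase u else ∅))).filter
        (fun k => x k = true)).card : ℕ) : ZMod 2)
      = (∑ k : {w : V // w ≠ u ∧ w ≠ v}, ind (k.1 ∈ S) * bi (x k)) + (∑ k : {w : V // w ≠ u ∧ w ≠ v}, ind (G.Adj u k.1) * ind (G.Adj v k.1) * bi (x k)) + (bi r + ind (v ∈ S)) * (∑ k : {w : V // w ≠ u ∧ w ≠ v}, ind (G.Adj u k.1) * bi (x k)) + (bi s + ind (u ∈ S)) * (∑ k : {w : V // w ≠ u ∧ w ≠ v}, ind (G.Adj v k.1) * bi (x k)) := by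
    rw [card_filter_zmod]
    have e : ∀ k : {w : V // w ≠ u ∧ w ≠ v}, ind (k ∈ Finset.univ.filter (fun w : {w : V // w ≠ u ∧ w ≠ v} => w.1 ∈ symmDiff (symmDiff (symmDiff ((S.erase u).erase v) (G.neighborFinset u ∩ G.neighborFinset v)) (if xor r (decide (v ∈ S)) then (G.neighborFinset u).erase v else ∅)) (if xor s (decide (u ∈ S)) then (G.neighborFinset v).erase u else ∅)))
        = ind (k.1 ∈ S) + ind (G.Adj u k.1) * ind (G.Adj v k.1)
          + (bi r + ind (v ∈ S)) * ind (G.Adj u k.1)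
          + (bi s + ind (u ∈ S)) * ind (G.Adj v k.1) := by
      intro k
      rw [ind_congr (show (k ∈ Finset.univ.filter (fun w : {w : V // w ≠ u ∧ w ≠ v} => w.1 ∈ symmDiff (symmDiff (symmDiff ((S.erase u).erase v) (G.neighborFinset u ∩ G.neighborFinset v)) (if xor r (decide (v ∈ S)) then (G.neighborFinset u).erase v else ∅)) (if xor s (decide (u ∈ S)) then (G.neighborFinset v).erase u else ∅)))
        ↔ k.1 ∈ symmDiff (symmDiff (symmDiff ((S.erase u).erase v) (G.neighborFinset u ∩ G.neighborFinset v)) (if xor r (decide (v ∈ S)) then (G.neighborFinset u).erase v else ∅)) (if xor s (decide (u ∈ S)) then (G.neighborFinset v).erase u else ∅) from by simp)]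
      rw [ind_symmDiff, ind_symmDiff, ind_symmDiff]
      have pa : ind (k.1 ∈ (S.erase u).erase v) = ind (k.1 ∈ S) :=
        ind_congr (by simp [k.2.1, k.2.2])
      have pb : ind (k.1 ∈ G.neighborFinset u ∩ G.neighborFinset v)
          = ind (G.Adj u k.1) * ind (G.Adj v k.1) := by
        rw [ind_congr (show k.1 ∈ G.neighborFinset u ∩ G.neighborFinset v
          ↔ G.Adj u k.1 ∧ G.Adj v k.1 from by
            simp [Finset.mem_inter, SimpleGraph.mem_neighborFinset]), ind_and]
      have pc : ind (k.1 ∈ (if xor r (decide (v ∈ S)) then (G.neighborFinset u).erase v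
          else ∅)) = (bi r + ind (v ∈ S)) * ind (G.Adj u k.1) := by
        rw [show bi r + ind (v ∈ S) = bi (xor r (decide (v ∈ S))) from by
          rw [bi_xor, bi_decide]]
        cases hxr : xor r (decide (v ∈ S))
        · simp [ind, bi]
        · rw [bi_true, one_mul]
          simp only [if_true]
          exact ind_congr (by simp [SimpleGraph.mem_neighborFinset, k.2.2])
      have pd : ind (k.1 ∈ (if xor s (decide (u ∈ S)) then (G.neighborFinset v).erase u
          else ∅)) = (bi s + ind (u ∈ S)) * ind (G.Adj v k.1) := by
        rw [show bi s + ind (u ∈ S) = bi (xor s (decide (u ∈ S))) from by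
          rw [bi_xor, bi_decide]]
        cases hxs : xor s (decide (u ∈ S))
        · simp [ind, bi]
        · rw [bi_true, one_mul]
          simp only [if_true]
          exact ind_congr (by simp [SimpleGraph.mem_neighborFinset, k.2.1])
      rw [pa, pb, pc, pd]
    calc (∑ k : {w : V // w ≠ u ∧ w ≠ v}, ind (k ∈ Finset.univ.filter (fun w : {w : V // w ≠ u ∧ w ≠ v} => w.1 ∈ symmDiff (symmDiff (symmDiff ((S.erase u).erase v) (G.neighborFinset u ∩ G.neighborFinset v)) (if xor r (decide (v ∈ S)) then (G.neighborFinset u).erase v else ∅)) (if xor s (decide (u ∈ S)) then (G.neighborFinset v).erase u else ∅)))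
          * ind (x k = true))
        = ∑ k : {w : V // w ≠ u ∧ w ≠ v}, (ind (k.1 ∈ S) * bi (x k)
            + ind (G.Adj u k.1) * ind (G.Adj v k.1) * bi (x k)
            + (bi r + ind (v ∈ S)) * (ind (G.Adj u k.1) * bi (x k))
            + (bi s + ind (u ∈ S)) * (ind (G.Adj v k.1) * bi (x k))) := by
          refine Finset.sum_congr rfl fun k _ => ?_
          rw [e k]
          simp only [bi]
          ring
      _ = (∑ k : {w : V // w ≠ u ∧ w ≠ v}, ind (k.1 ∈ S) * bi (x k)) + (∑ k : {w : V // w ≠ u ∧ w ≠ v}, ind (G.Adj u k.1) * ind (G.Adj v k.1) * bi (x k)) + (bi r + ind (v ∈ S)) * (∑ k : {w : V // w ≠ u ∧ w ≠ v}, ind (G.Adj u k.1) * bi (x k)) + (bi s + ind (u ∈ S)) * (∑ k : {w : V // w ≠ u ∧ w ≠ v}, ind (G.Adj v k.1) * bi (x k)) := by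
          rw [Finset.sum_add_distrib, Finset.sum_add_distrib, Finset.sum_add_distrib,
            ← Finset.mul_sum, ← Finset.mul_sum]
    -- RHS state amplitude
  have hsgP : sgState ((pivot G u v).comap (Subtype.val : {w : V // w ≠ u ∧ w ≠ v} → V))
      (Finset.univ.filter (fun w : {w : V // w ≠ u ∧ w ≠ v} => w.1 ∈ symmDiff (symmDiff (symmDiff ((S.erase u).erase v) (G.neighborFinset u ∩ G.neighborFinset v)) (if xor r (decide (v ∈ S)) then (G.neighborFinset u).erase v else ∅)) (if xor s (decide (u ∈ S)) then (G.neighborFinset v).erase u else ∅))) x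
      = chi (((((Finset.univ.filter (fun w : {w : V // w ≠ u ∧ w ≠ v} => w.1 ∈ symmDiff (symmDiff (symmDiff ((S.erase u).erase v) (G.neighborFinset u ∩ G.neighborFinset v)) (if xor r (decide (v ∈ S)) then (G.neighborFinset u).erase v else ∅)) (if xor s (decide (u ∈ S)) then (G.neighborFinset v).erase u else ∅))).filter
            (fun k => x k = true)).card : ℕ) : ZMod 2)
          + ((qVal ((pivot G u v).comap (Subtype.val : {w : V // w ≠ u ∧ w ≠ v} → V)) x : ℕ) : ZMod 2))
        * ((Real.sqrt (2 ^ Fintype.card {w : V // w ≠ u ∧ w ≠ v}) : ℝ) : ℂ)⁻¹ := by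
    simp only [sgState, Zop, graphState, neg_one_pow_chi, chi_add, div_eq_mul_inv]
    ring
  have key : ∀ (e1 e2 e3 : ZMod 2) (z : ℂ),
      chi e1 * ((Real.sqrt 2 : ℝ) : ℂ)⁻¹ * (chi e2 * ((Real.sqrt 2 : ℝ) : ℂ)⁻¹) * (chi e3 * z)
        = chi (e1 + e2 + e3)
            * (((Real.sqrt 2 : ℝ) : ℂ)⁻¹ * (((Real.sqrt 2 : ℝ) : ℂ)⁻¹ * z)) := by
    intro e1 e2 e3 z
    rw [chi_add, chi_add]
    ring
  simp only [contract2, hsgG, hsgP, conj_xVec, Fintype.sum_bool, hM, hQ, hM', hQ',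
    hsqrtC, key]
  have hend := endgame ((∑ k : {w : V // w ≠ u ∧ w ≠ v}, ind (k.1 ∈ S) * bi (x k)) + (∑ k : {w : V // w ≠ u ∧ w ≠ v}, ∑ l : {w : V // w ≠ u ∧ w ≠ v}, ind (k.1 < l.1) * ind (G.Adj k.1 l.1) * bi (x k) * bi (x l))) (bi s + ind (u ∈ S) + (∑ k : {w : V // w ≠ u ∧ w ≠ v}, ind (G.Adj u k.1) * bi (x k))) (bi r + ind (v ∈ S) + (∑ k : {w : V // w ≠ u ∧ w ≠ v}, ind (G.Adj v k.1) * bi (x k))) (bi s + ind (u ∈ S)) (bi r + ind (v ∈ S))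
    ((Real.sqrt 2 : ℝ) : ℂ)⁻¹ ((Real.sqrt (2 ^ Fintype.card {w : V // w ≠ u ∧ w ≠ v}) : ℝ) : ℂ) hi2
  rw [show (bi s * bi true + bi r * bi true + ((∑ k : {w : V // w ≠ u ∧ w ≠ v}, ind (k.1 ∈ S) * bi (x k)) + bi true * ind (u ∈ S) + bi true * ind (v ∈ S) + ((∑ k : {w : V // w ≠ u ∧ w ≠ v}, ∑ l : {w : V // w ≠ u ∧ w ≠ v}, ind (k.1 < l.1) * ind (G.Adj k.1 l.1) * bi (x k) * bi (x l)) + bi true * (∑ k : {w : V // w ≠ u ∧ w ≠ v}, ind (G.Adj u k.1) * bi (x k)) + bi true * (∑ k : {w : V // w ≠ u ∧ w ≠ v}, ind (G.Adj v k.1) * bi (x k)) + bi true * bi true))) = ((∑ k : {w : V // w ≠ u ∧ w ≠ v}, ind (k.1 ∈ S) * bi (x k)) + (∑ k : {w : V // w ≠ u ∧ w ≠ v}, ∑ l : {w : V // w ≠ u ∧ w ≠ v}, ind (k.1 < l.1) * ind (G.Adj k.1 l.1) * bi (x k) * bi (x l)) + (bi s + ind (u ∈ S) + (∑ k : {w :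 V // w ≠ u ∧ w ≠ v}, ind (G.Adj u k.1) * bi (x k))) + (bi r + ind (v ∈ S) + (∑ k : {w : V // w ≠ u ∧ w ≠ v}, ind (G.Adj v k.1) * bi (x k))) + 1) from by
      simp only [bi_true, bi_false]; ring,
    show (bi s * bi true + bi r * bi false + ((∑ k : {w : V // w ≠ u ∧ w ≠ v}, ind (k.1 ∈ S) * bi (x k)) + bi true * ind (u ∈ S) + bi false * ind (v ∈ S) + ((∑ k : {w : V // w ≠ u ∧ w ≠ v}, ∑ l : {w : V // w ≠ u ∧ w ≠ v}, ind (k.1 < l.1) * ind (G.Adj k.1 l.1) * bi (x k) * bi (x l)) + bi true * (∑ k : {w : V // w ≠ u ∧ w ≠ v}, ind (G.Adj u k.1) * bi (x k)) + bi false * (∑ k : {w : V // w ≠ u ∧ w ≠ v}, ind (G.Adj v k.1) * bi (x k)) + bi true * bi false))) = ((∑ k : {w : V // w ≠ u ∧ w ≠ v}, ind (k.1 ∈ S) * bi (x k)) + (∑ k : {w : V // w ≠ u ∧ w ≠ v}, ∑ l : {w : V // w ≠ u ∧ w ≠ v}, ind (k.1 < l.1) * ind (G.Adj k.1 l.1)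 * bi (x k) * bi (x l)) + (bi s + ind (u ∈ S) + (∑ k : {w : V // w ≠ u ∧ w ≠ v}, ind (G.Adj u k.1) * bi (x k)))) from by
      simp only [bi_true, bi_false]; ring,
    show (bi s * bi false + bi r * bi true + ((∑ k : {w : V // w ≠ u ∧ w ≠ v}, ind (k.1 ∈ S) * bi (x k)) + bi false * ind (u ∈ S) + bi true * ind (v ∈ S) + ((∑ k : {w : V // w ≠ u ∧ w ≠ v}, ∑ l : {w : V // w ≠ u ∧ w ≠ v}, ind (k.1 < l.1) * ind (G.Adj k.1 l.1) * bi (x k) * bi (x l)) + bi false * (∑ k : {w : V // w ≠ u ∧ w ≠ v}, ind (G.Adj u k.1) * bi (x k)) + bi true * (∑ k : {w : V // w ≠ u ∧ w ≠ v}, ind (G.Adj v k.1) * bi (x k)) + bi false * bi true))) = ((∑ k : {w : V // w ≠ u ∧ w ≠ v}, ind (k.1 ∈ S) * bi (x k)) + (∑ k : {w : V // w ≠ u ∧ w ≠ v}, ∑ l : {w : V // w ≠ u ∧ w ≠ v}, ind (k.1 < l.1) * ind (G.Adj k.1 l.1) * bi (x k) * bi (x l)) + (bi r + ind (v ∈ S)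 + (∑ k : {w : V // w ≠ u ∧ w ≠ v}, ind (G.Adj v k.1) * bi (x k)))) from by
      simp only [bi_true, bi_false]; ring,
    show (bi s * bi false + bi r * bi false + ((∑ k : {w : V // w ≠ u ∧ w ≠ v}, ind (k.1 ∈ S) * bi (x k)) + bi false * ind (u ∈ S) + bi false * ind (v ∈ S) + ((∑ k : {w : V // w ≠ u ∧ w ≠ v}, ∑ l : {w : V // w ≠ u ∧ w ≠ v}, ind (k.1 < l.1) * ind (G.Adj k.1 l.1) * bi (x k) * bi (x l)) + bi false * (∑ k : {w : V // w ≠ u ∧ w ≠ v}, ind (G.Adj u k.1) * bi (x k)) + bi false * (∑ k : {w : V // w ≠ u ∧ w ≠ v}, ind (G.Adj v k.1) * bi (x k)) + bi false * bi false))) = ((∑ k : {w : V // w ≠ u ∧ w ≠ v}, ind (k.1 ∈ S) * bi (x k)) + (∑ k : {w : V // w ≠ u ∧ w ≠ v}, ∑ l : {w : V // w ≠ u ∧ w ≠ v}, ind (k.1 < l.1) * ind (G.Adj k.1 l.1) * bi (x k) * bi (x l))) from by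
      simp only [bi_true, bi_false]; ring,
    show ((∑ k : {w : V // w ≠ u ∧ w ≠ v}, ind (k.1 ∈ S) * bi (x k)) + (∑ k : {w : V // w ≠ u ∧ w ≠ v}, ind (G.Adj u k.1) * ind (G.Adj v k.1) * bi (x k)) + (bi r + ind (v ∈ S)) * (∑ k : {w : V // w ≠ u ∧ w ≠ v}, ind (G.Adj u k.1) * bi (x k)) + (bi s + ind (u ∈ S)) * (∑ k : {w : V // w ≠ u ∧ w ≠ v}, ind (G.Adj v k.1) * bi (x k)) + ((∑ k : {w : V // w ≠ u ∧ w ≠ v}, ∑ l : {w : V // w ≠ u ∧ w ≠ v}, ind (k.1 < l.1) * ind (G.Adj k.1 l.1) * bi (x k) * bi (x l)) + (∑ k : {w : V // w ≠ u ∧ w ≠ v}, ind (G.Adj u k.1) * bi (x k)) * (∑ k : {w : V // w ≠ u ∧ w ≠ v}, ind (G.Adj v k.1) * bi (x k)) + (∑ k : {w : V // w ≠ u ∧ w ≠ v}, ind (G.Adj u k.1) * ind (G.Adj v k.1) * bi (x k)))) = ((∑ k : {w : V // w ≠ u ∧ w ≠ v}, ind (k.1 ∈ S) * bi (x k)) +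 (∑ k : {w : V // w ≠ u ∧ w ≠ v}, ∑ l : {w : V // w ≠ u ∧ w ≠ v}, ind (k.1 < l.1) * ind (G.Adj k.1 l.1) * bi (x k) * bi (x l)) + (bi s + ind (u ∈ S) + (∑ k : {w : V // w ≠ u ∧ w ≠ v}, ind (G.Adj u k.1) * bi (x k))) * (bi r + ind (v ∈ S) + (∑ k : {w : V // w ≠ u ∧ w ≠ v}, ind (G.Adj v k.1) * bi (x k))) + (bi s + ind (u ∈ S)) * (bi r + ind (v ∈ S))) from by
      linear_combination CharTwo.add_self_eq_zero (∑ k : {w : V // w ≠ u ∧ w ≠ v}, ind (G.Adj u k.1) * ind (G.Adj v k.1) * bi (x k))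
        - CharTwo.add_self_eq_zero ((bi s + ind (u ∈ S)) * (bi r + ind (v ∈ S)))]
  exact hend
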